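/- Fix T ∈ ℕ, 0 ≤ β₁ < 1, a sequence β_{1t} ∈ [0, β₁] for t ∈ [T], G₂ > 0, and R∞ > 0. Let g₁, …, g_T ∈ ℝ^d with ‖g_t‖ ≤ G₂, define m₀ = 0 and m_t = β_{1t}·m_{t−1} + (1−β_{1t})·g_t, and let η_t ∈ ℝ^d have positive coordinates satisfying √t·‖η_t‖∞ ≤ R∞ for each t. Then Σ_{t=1}^{T} [ (1/(2(1−β_{1t})))·‖η_t^{1/2} ⊙ m_t‖² + (β_{1t}/(2(1−β_{1t})))·‖η_t^{1/2} ⊙ m_{t−1}‖² ] ≤ (2√T − 1)·R∞·G₂²/(1−β₁), where ⊙ denotes elementwise product, η_t^{1/2} the elementwise square root, and ‖·‖ the Euclidean norm. -/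
import Mathlib

lemma adabound_sum_one_div_sqrt_le (T : ℕ) (hT : 1 ≤ T) :
    ∑ t ∈ Finset.Icc 1 T, 1 / Real.sqrt t ≤ 2 * Real.sqrt T - 1 := by
  induction T, hT using Nat.le_induction with
  | base => norm_num
  | succ n hn ih =>
    rw [Finset.sum_Icc_succ_top (by omega)]
    have ha : (0:ℝ) ≤ Real.sqrt n := Real.sqrt_nonneg _
    have hb : (0:ℝ) < Real.sqrt (↑(n+1)) := Real.sqrt_pos.mpr (by positivity)
    have hab : Real.sqrt n ≤ Real.sqrt (↑(n+1)) := Real.sqrt_le_sqrt (by push_cast; linarith)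
    have ha2 : Real.sqrt n ^ 2 = n := Real.sq_sqrt (by positivity)
    have hb2 : Real.sqrt (↑(n+1)) ^ 2 = (n:ℝ) + 1 := by
      rw [Real.sq_sqrt (by positivity)]; push_cast; ring
    have key : 1 / Real.sqrt (↑(n+1)) ≤ 2 * Real.sqrt (↑(n+1)) - 2 * Real.sqrt n := by
      rw [div_le_iff₀ hb]
      nlinarith [sq_nonneg (Real.sqrt n - Real.sqrt (↑(n+1)))]
    linarith

/-- The momentum term bound in the AdaBound regret analysis: with first-moment
estimates `m_t = β_{1t}·m_{t-1} + (1-β_{1t})·g_t` (`m₀ = 0`, `β_{1t} ≤ β₁ < 1`),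
gradients bounded by `G₂` in Euclidean norm, and per-coordinate learning rates
`η_t` with positive coordinates satisfying `√t·‖η_t‖∞ ≤ R∞`, one has
`Σ_{t=1}^T [ ‖η_t^{1/2}⊙m_t‖²/(2(1-β_{1t})) + β_{1t}·‖η_t^{1/2}⊙m_{t-1}‖²/(2(1-β_{1t})) ]
  ≤ (2√T - 1)·R∞·G₂²/(1-β₁)`. -/
theorem adabound_momentum_term_bound
    (d T : ℕ) (hT : 1 ≤ T)
    (beta1 : ℝ) (h0 : 0 ≤ beta1) (h1 : beta1 < 1)
    (beta1t : ℕ → ℝ)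
    (hb1t : ∀ t ∈ Finset.Icc 1 T, 0 ≤ beta1t t ∧ beta1t t ≤ beta1)
    (G2 Rinf : ℝ) (hG2 : 0 < G2) (hRinf : 0 < Rinf)
    (g m : ℕ → EuclideanSpace ℝ (Fin d))
    (hg : ∀ t ∈ Finset.Icc 1 T, ‖g t‖ ≤ G2)
    (hm0 : m 0 = 0)
    (hm : ∀ t ∈ Finset.Icc 1 T, m t = beta1t t • m (t - 1) + (1 - beta1t t) • g t)
    (eta : ℕ → Fin d → ℝ)
    (hetapos : ∀ t ∈ Finset.Icc 1 T, ∀ i, 0 < eta t i)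
    (heta : ∀ t ∈ Finset.Icc 1 T, Real.sqrt t * ‖eta t‖ ≤ Rinf) :
    ∑ t ∈ Finset.Icc 1 T,
        (1 / (2 * (1 - beta1t t)) * ∑ i, (Real.sqrt (eta t i) * m t i) ^ 2 +
          beta1t t / (2 * (1 - beta1t t)) * ∑ i, (Real.sqrt (eta t i) * m (t - 1) i) ^ 2) ≤
      (2 * Real.sqrt T - 1) * Rinf * G2 ^ 2 / (1 - beta1) := by
  -- bound on ‖m t‖
  have hmb : ∀ t, t ≤ T → ‖m t‖ ≤ G2 := by
    intro t
    induction t with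
    | zero => intro _; rw [hm0]; simpa using hG2.le
    | succ n ih =>
      intro h
      have htmem : n + 1 ∈ Finset.Icc 1 T := by simp; omega
      obtain ⟨hc0, hc1⟩ := hb1t _ htmem
      have hc1' : beta1t (n+1) ≤ 1 := hc1.trans h1.le
      have hmn : ‖m n‖ ≤ G2 := ih (by omega)
      have hgn : ‖g (n+1)‖ ≤ G2 := hg _ htmem
      rw [hm _ htmem]
      simp only [Nat.add_sub_cancel]
      calc ‖beta1t (n+1) • m n + (1 - beta1t (n+1)) • g (n+1)‖
          ≤ ‖beta1t (n+1) • m n‖ + ‖(1 - beta1t (n+1)) • g (n+1)‖ := norm_add_le _ _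
        _ = beta1t (n+1) * ‖m n‖ + (1 - beta1t (n+1)) * ‖g (n+1)‖ := by
            rw [norm_smul, norm_smul, Real.norm_eq_abs, Real.norm_eq_abs,
              abs_of_nonneg hc0, abs_of_nonneg (by linarith)]
        _ ≤ beta1t (n+1) * G2 + (1 - beta1t (n+1)) * G2 := by
            gcongr <;> linarith
        _ = G2 := by ring
  -- per-term bound on weighted sums
  have hsum : ∀ t ∈ Finset.Icc 1 T, ∀ v : EuclideanSpace ℝ (Fin d), ‖v‖ ≤ G2 →
      ∑ i, (Real.sqrt (eta t i) * v i) ^ 2 ≤ ‖eta t‖ * G2 ^ 2 := by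
    intro t ht v hv
    have hE0 : (0:ℝ) ≤ ‖eta t‖ := norm_nonneg _
    have step1 : ∑ i, (Real.sqrt (eta t i) * v i) ^ 2 ≤ ∑ i, ‖eta t‖ * (v i) ^ 2 := by
      apply Finset.sum_le_sum
      intro i _
      have hpos := hetapos t ht i
      rw [mul_pow, Real.sq_sqrt hpos.le]
      have : eta t i ≤ ‖eta t‖ := by
        calc eta t i ≤ |eta t i| := le_abs_self _
          _ = ‖eta t i‖ := rfl
          _ ≤ ‖eta t‖ := norm_le_pi_norm (eta t) i
      exact mul_le_mul_of_nonneg_right this (sq_nonneg _)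
    have step2 : ∑ i, ‖eta t‖ * (v i) ^ 2 = ‖eta t‖ * ‖v‖ ^ 2 := by
      rw [← Finset.mul_sum]
      congr 1
      rw [EuclideanSpace.norm_eq, Real.sq_sqrt (by positivity)]
      simp [Real.norm_eq_abs, sq_abs]
    calc ∑ i, (Real.sqrt (eta t i) * v i) ^ 2 ≤ ‖eta t‖ * ‖v‖ ^ 2 := by rw [← step2]; exact step1
      _ ≤ ‖eta t‖ * G2 ^ 2 := by gcongr
  have hb1' : (0:ℝ) < 1 - beta1 := by linarith
  -- per-term final bound
  have hterm : ∀ t ∈ Finset.Icc 1 T,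
      1 / (2 * (1 - beta1t t)) * ∑ i, (Real.sqrt (eta t i) * m t i) ^ 2 +
        beta1t t / (2 * (1 - beta1t t)) * ∑ i, (Real.sqrt (eta t i) * m (t - 1) i) ^ 2 ≤
      Rinf * G2 ^ 2 / (1 - beta1) * (1 / Real.sqrt t) := by
    intro t ht
    obtain ⟨hc0, hc1⟩ := hb1t _ ht
    have htmem := ht
    simp only [Finset.mem_Icc] at htmem
    have hc1' : 0 < 1 - beta1t t := by linarith
    have hs : (0:ℝ) < Real.sqrt t := Real.sqrt_pos.mpr (by exact_mod_cast Nat.pos_of_ne_zero (by omega))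
    have hE0 : (0:ℝ) ≤ ‖eta t‖ := norm_nonneg _
    have hEle : ‖eta t‖ ≤ Rinf / Real.sqrt t := by
      rw [le_div_iff₀ hs]
      linarith [heta t ht, mul_comm (Real.sqrt t) ‖eta t‖]
    have hA : ∑ i, (Real.sqrt (eta t i) * m t i) ^ 2 ≤ ‖eta t‖ * G2 ^ 2 :=
      hsum t ht _ (hmb t htmem.2)
    have hB : ∑ i, (Real.sqrt (eta t i) * m (t-1) i) ^ 2 ≤ ‖eta t‖ * G2 ^ 2 :=
      hsum t ht _ (hmb (t-1) (by omega))
    have hA0 : (0:ℝ) ≤ ∑ i, (Real.sqrt (eta t i) * m t i) ^ 2 :=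
      Finset.sum_nonneg fun i _ => sq_nonneg _
    have hB0 : (0:ℝ) ≤ ∑ i, (Real.sqrt (eta t i) * m (t-1) i) ^ 2 :=
      Finset.sum_nonneg fun i _ => sq_nonneg _
    calc 1 / (2 * (1 - beta1t t)) * ∑ i, (Real.sqrt (eta t i) * m t i) ^ 2 +
          beta1t t / (2 * (1 - beta1t t)) * ∑ i, (Real.sqrt (eta t i) * m (t - 1) i) ^ 2
        ≤ 1 / (2 * (1 - beta1t t)) * (‖eta t‖ * G2 ^ 2) +
          beta1t t / (2 * (1 - beta1t t)) * (‖eta t‖ * G2 ^ 2) := by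
          gcongr <;> positivity
      _ = (1 + beta1t t) / (2 * (1 - beta1t t)) * (‖eta t‖ * G2 ^ 2) := by ring
      _ ≤ 1 / (1 - beta1) * (‖eta t‖ * G2 ^ 2) := by
          apply mul_le_mul_of_nonneg_right _ (by positivity)
          rw [div_le_div_iff₀ (by linarith) hb1']
          nlinarith
      _ ≤ 1 / (1 - beta1) * ((Rinf / Real.sqrt t) * G2 ^ 2) := by
          gcongr
      _ = Rinf * G2 ^ 2 / (1 - beta1) * (1 / Real.sqrt t) := by
          field_simp
  calc ∑ t ∈ Finset.Icc 1 T,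
        (1 / (2 * (1 - beta1t t)) * ∑ i, (Real.sqrt (eta t i) * m t i) ^ 2 +
          beta1t t / (2 * (1 - beta1t t)) * ∑ i, (Real.sqrt (eta t i) * m (t - 1) i) ^ 2)
      ≤ ∑ t ∈ Finset.Icc 1 T, Rinf * G2 ^ 2 / (1 - beta1) * (1 / Real.sqrt t) :=
        Finset.sum_le_sum hterm
    _ = Rinf * G2 ^ 2 / (1 - beta1) * ∑ t ∈ Finset.Icc 1 T, 1 / Real.sqrt t := by
        rw [Finset.mul_sum]
    _ ≤ Rinf * G2 ^ 2 / (1 - beta1) * (2 * Real.sqrt T - 1) := by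
        have := adabound_sum_one_div_sqrt_le T hT
        have hc : (0:ℝ) ≤ Rinf * G2 ^ 2 / (1 - beta1) := by positivity
        exact mul_le_mul_of_nonneg_left this hc
    _ = (2 * Real.sqrt T - 1) * Rinf * G2 ^ 2 / (1 - beta1) := by ring
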